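/- arXiv:math/0211145 — 3 statements merged into one kernel-verified Lean document; each statement's English description precedes it below -/
import Mathlib

section
/- Let (M₁, Δ₁) and (M₂, Δ₂) be bialgebras (or coalgebras with algebra structure), and let m : M₁ ⊗ M₂ → M₁ ⊗ M₂ be an algebra isomorphism satisfying the matching conditions (Δ₁ ⊗ id)∘m = m₂₃ ∘ m₁₃ ∘ (Δ₁ ⊗ id) and (id ⊗ Δ₂)∘m = m₁₃ ∘ m₁₂ ∘ (id ⊗ Δ₂). Then α : M₂ → M₁ ⊗ M₂ defined by α(x) = m(1 ⊗ x) satisfies the left coaction identity (Δ₁ ⊗ id)∘α = (id ⊗ α)∘α. -/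
/-! STATEMENT 4: a matching `m` of bialgebras `(M₁,Δ₁)`, `(M₂,Δ₂)` yields a left coaction
`α(x) = m(1 ⊗ x)`: `(Δ₁ ⊗ id)∘α = (id ⊗ α)∘α` (up to the associator). -/
open TensorProduct Coalgebra

noncomputable section

variable (K M₁ M₂ : Type*) [Field K] [Ring M₁] [Ring M₂] [Bialgebra K M₁] [Bialgebra K M₂]

/-- `m₂₃` : the map `m` applied to the last two legs of `M₁ ⊗ M₁ ⊗ M₂`. -/
def m23 (mL : (M₁ ⊗[K] M₂) →ₗ[K] (M₁ ⊗[K] M₂)) :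
    ((M₁ ⊗[K] M₁) ⊗[K] M₂) →ₗ[K] ((M₁ ⊗[K] M₁) ⊗[K] M₂) :=
  (TensorProduct.assoc K M₁ M₁ M₂).symm.toLinearMap ∘ₗ mL.lTensor M₁ ∘ₗ
    (TensorProduct.assoc K M₁ M₁ M₂).toLinearMap

/-- The flip of the first two legs of `M₁ ⊗ M₁ ⊗ M₂`. -/
def swapL : ((M₁ ⊗[K] M₁) ⊗[K] M₂) →ₗ[K] ((M₁ ⊗[K] M₁) ⊗[K] M₂) :=
  (TensorProduct.congr (TensorProduct.comm K M₁ M₁) (LinearEquiv.refl K M₂)).toLinearMap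

/-- `m₁₃` : the map `m` applied to the outer legs of `M₁ ⊗ M₁ ⊗ M₂`. -/
def m13L (mL : (M₁ ⊗[K] M₂) →ₗ[K] (M₁ ⊗[K] M₂)) :
    ((M₁ ⊗[K] M₁) ⊗[K] M₂) →ₗ[K] ((M₁ ⊗[K] M₁) ⊗[K] M₂) :=
  swapL K M₁ M₂ ∘ₗ m23 K M₁ M₂ mL ∘ₗ swapL K M₁ M₂

/-- `m₁₂` : the map `m` applied to the first two legs of `M₁ ⊗ M₂ ⊗ M₂`. -/
def m12 (mL : (M₁ ⊗[K] M₂) →ₗ[K] (M₁ ⊗[K] M₂)) :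
    (M₁ ⊗[K] (M₂ ⊗[K] M₂)) →ₗ[K] (M₁ ⊗[K] (M₂ ⊗[K] M₂)) :=
  (TensorProduct.assoc K M₁ M₂ M₂).toLinearMap ∘ₗ mL.rTensor M₂ ∘ₗ
    (TensorProduct.assoc K M₁ M₂ M₂).symm.toLinearMap

/-- The flip of the last two legs of `M₁ ⊗ M₂ ⊗ M₂`. -/
def swapR : (M₁ ⊗[K] (M₂ ⊗[K] M₂)) →ₗ[K] (M₁ ⊗[K] (M₂ ⊗[K] M₂)) :=
  (TensorProduct.congr (LinearEquiv.refl K M₁) (TensorProduct.comm K M₂ M₂)).toLinearMap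

/-- `m₁₃` : the map `m` applied to the outer legs of `M₁ ⊗ M₂ ⊗ M₂`. -/
def m13R (mL : (M₁ ⊗[K] M₂) →ₗ[K] (M₁ ⊗[K] M₂)) :
    (M₁ ⊗[K] (M₂ ⊗[K] M₂)) →ₗ[K] (M₁ ⊗[K] (M₂ ⊗[K] M₂)) :=
  swapR K M₁ M₂ ∘ₗ m12 K M₁ M₂ mL ∘ₗ swapR K M₁ M₂

/-- The first matching condition `(Δ₁ ⊗ id)∘m = m₂₃ ∘ m₁₃ ∘ (Δ₁ ⊗ id)`. -/
def MatchingLeft (mL : (M₁ ⊗[K] M₂) →ₗ[K] (M₁ ⊗[K] M₂)) : Prop :=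
  (comul (R := K) (A := M₁)).rTensor M₂ ∘ₗ mL =
    m23 K M₁ M₂ mL ∘ₗ m13L K M₁ M₂ mL ∘ₗ (comul (R := K) (A := M₁)).rTensor M₂

/-- The second matching condition `(id ⊗ Δ₂)∘m = m₁₃ ∘ m₁₂ ∘ (id ⊗ Δ₂)`. -/
def MatchingRight (mL : (M₁ ⊗[K] M₂) →ₗ[K] (M₁ ⊗[K] M₂)) : Prop :=
  (comul (R := K) (A := M₂)).lTensor M₁ ∘ₗ mL =
    m13R K M₁ M₂ mL ∘ₗ m12 K M₁ M₂ mL ∘ₗ (comul (R := K) (A := M₂)).lTensor M₁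

/-- `α(x) = m(1 ⊗ x)`. -/
def alphaMap (m : (M₁ ⊗[K] M₂) ≃ₐ[K] (M₁ ⊗[K] M₂)) : M₂ →ₗ[K] M₁ ⊗[K] M₂ :=
  m.toLinearMap ∘ₗ (Algebra.TensorProduct.includeRight : M₂ →ₐ[K] M₁ ⊗[K] M₂).toLinearMap

set_option synthInstance.maxHeartbeats 800000 in
lemma aux_m23 (mL : (M₁ ⊗[K] M₂) →ₗ[K] (M₁ ⊗[K] M₂)) (t : M₁ ⊗[K] M₂) :
    (TensorProduct.assoc K M₁ M₁ M₂)
      (m23 K M₁ M₂ mL (swapL K M₁ M₂ ((TensorProduct.assoc K M₁ M₁ M₂).symm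
        ((1 : M₁) ⊗ₜ[K] t)))) =
    (mL ∘ₗ (Algebra.TensorProduct.includeRight : M₂ →ₐ[K] M₁ ⊗[K] M₂).toLinearMap).lTensor M₁ t := by
  induction t using TensorProduct.induction_on with
  | zero => rw [TensorProduct.tmul_zero]; simp
  | tmul a b => simp [m23, swapL]
  | add x y hx hy =>
      rw [TensorProduct.tmul_add]
      simp only [map_add, hx, hy]

theorem alpha_coaction (m : (M₁ ⊗[K] M₂) ≃ₐ[K] (M₁ ⊗[K] M₂))
    (h₁ : MatchingLeft K M₁ M₂ m.toLinearMap) (h₂ : MatchingRight K M₁ M₂ m.toLinearMap) :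
    (TensorProduct.assoc K M₁ M₁ M₂).toLinearMap ∘ₗ
        (comul (R := K) (A := M₁)).rTensor M₂ ∘ₗ alphaMap K M₁ M₂ m =
      (alphaMap K M₁ M₂ m).lTensor M₁ ∘ₗ alphaMap K M₁ M₂ m := by
  ext x
  have key := congrFun (congrArg DFunLike.coe h₁) ((1 : M₁) ⊗ₜ[K] x)
  simp only [LinearMap.coe_comp, Function.comp_apply, LinearMap.rTensor_tmul,
    Bialgebra.comul_one, Algebra.TensorProduct.one_def] at key
  have hswap : swapL K M₁ M₂ (((1 : M₁) ⊗ₜ[K] (1 : M₁)) ⊗ₜ[K] x) =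
      ((1 : M₁) ⊗ₜ[K] (1 : M₁)) ⊗ₜ[K] x := by simp [swapL]
  have hm23 : m23 K M₁ M₂ m.toLinearMap (((1 : M₁) ⊗ₜ[K] (1 : M₁)) ⊗ₜ[K] x) =
      (TensorProduct.assoc K M₁ M₁ M₂).symm
        ((1 : M₁) ⊗ₜ[K] (m.toLinearMap ((1 : M₁) ⊗ₜ[K] x))) := by simp [m23]
  simp only [LinearMap.coe_comp, Function.comp_apply, LinearEquiv.coe_coe, alphaMap,
    AlgHom.toLinearMap_apply, Algebra.TensorProduct.includeRight_apply,
    LinearMap.rTensor_tmul, key, m13L, hswap, hm23]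
  change (TensorProduct.assoc K M₁ M₁ M₂) (((comul (R := K) (A := M₁)).rTensor M₂)
      (m.toLinearMap ((1 : M₁) ⊗ₜ[K] x))) =
    ((m.toLinearMap ∘ₗ (Algebra.TensorProduct.includeRight : M₂ →ₐ[K] M₁ ⊗[K] M₂).toLinearMap).lTensor M₁)
      (m.toLinearMap ((1 : M₁) ⊗ₜ[K] x))
  simp only [LinearMap.coe_comp, Function.comp_apply, key, m13L, hswap, hm23]
  exact aux_m23 K M₁ M₂ m.toLinearMap (m.toLinearMap ((1 : M₁) ⊗ₜ[K] x))

end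
end

section
/- Let (M₁, Δ₁), (M₂, Δ₂) be bialgebras and Z ∈ M₁ ⊗ M₂ an invertible element satisfying (Δ₁ ⊗ id)(Z) = Z₂₃Z₁₃ and (id ⊗ Δ₂)(Z) = Z₁₃Z₁₂. Then m(x) := Z x Z⁻¹ defines a matching of (M₁, Δ₁) and (M₂, Δ₂), i.e. m is an algebra automorphism of M₁ ⊗ M₂ satisfying (Δ₁ ⊗ id)∘m = m₂₃ ∘ m₁₃ ∘ (Δ₁ ⊗ id) and (id ⊗ Δ₂)∘m = m₁₃ ∘ m₁₂ ∘ (id ⊗ Δ₂). -/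
/-! STATEMENT 7: if `Z ∈ M₁ ⊗ M₂` is an invertible bicharacter, i.e.
`(Δ₁ ⊗ id)(Z) = Z₂₃Z₁₃` and `(id ⊗ Δ₂)(Z) = Z₁₃Z₁₂`, then `m(x) = Z x Z⁻¹` defines a
matching of `(M₁,Δ₁)` and `(M₂,Δ₂)`: an algebra automorphism satisfying the two
matching conditions. -/
open TensorProduct Coalgebra

set_option maxHeartbeats 1000000
set_option synthInstance.maxHeartbeats 200000

noncomputable section

variable (K M₁ M₂ : Type*) [Field K] [Ring M₁] [Ring M₂] [Bialgebra K M₁] [Bialgebra K M₂]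

/-- The embedding onto legs 1,3 of `M₁ ⊗ M₁ ⊗ M₂`. -/
def iota13L : (M₁ ⊗[K] M₂) →ₐ[K] (M₁ ⊗[K] M₁) ⊗[K] M₂ :=
  Algebra.TensorProduct.map
    (Algebra.TensorProduct.includeLeft : M₁ →ₐ[K] M₁ ⊗[K] M₁) (AlgHom.id K M₂)

/-- The embedding onto legs 2,3 of `M₁ ⊗ M₁ ⊗ M₂`. -/
def iota23L : (M₁ ⊗[K] M₂) →ₐ[K] (M₁ ⊗[K] M₁) ⊗[K] M₂ :=
  Algebra.TensorProduct.map
    (Algebra.TensorProduct.includeRight : M₁ →ₐ[K] M₁ ⊗[K] M₁) (AlgHom.id K M₂)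

/-- The embedding onto legs 1,2 of `M₁ ⊗ M₂ ⊗ M₂`. -/
def iota12R : (M₁ ⊗[K] M₂) →ₐ[K] M₁ ⊗[K] (M₂ ⊗[K] M₂) :=
  Algebra.TensorProduct.map (AlgHom.id K M₁)
    (Algebra.TensorProduct.includeLeft : M₂ →ₐ[K] M₂ ⊗[K] M₂)

/-- The embedding onto legs 1,3 of `M₁ ⊗ M₂ ⊗ M₂`. -/
def iota13R : (M₁ ⊗[K] M₂) →ₐ[K] M₁ ⊗[K] (M₂ ⊗[K] M₂) :=
  Algebra.TensorProduct.map (AlgHom.id K M₁)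
    (Algebra.TensorProduct.includeRight : M₂ →ₐ[K] M₂ ⊗[K] M₂)


/-- Conjugation by a unit as an algebra automorphism. -/
def conjAut {A : Type*} [Ring A] [Algebra K A] (u : Aˣ) : A ≃ₐ[K] A where
  toFun x := u * x * ↑u⁻¹
  invFun x := ↑u⁻¹ * x * u
  left_inv x := by simp [mul_assoc]
  right_inv x := by simp [mul_assoc]
  map_mul' x y := by simp [mul_assoc]
  map_add' x y := by simp [mul_add, add_mul]
  commutes' r := by
    show ↑u * algebraMap K A r * ↑u⁻¹ = algebraMap K A r
    rw [mul_assoc, Algebra.commutes r ((↑u⁻¹ : A)), ← mul_assoc, Units.mul_inv, one_mul]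

theorem conjAut_apply {A : Type*} [Ring A] [Algebra K A] (u : Aˣ) (x : A) :
    conjAut K u x = u * x * ↑u⁻¹ := rfl

theorem lTensor_conj (u : (M₁ ⊗[K] M₂)ˣ) :
    (conjAut K u).toLinearMap.lTensor M₁ =
      LinearMap.mulLeft K ((1 : M₁) ⊗ₜ[K] ((u : M₁ ⊗[K] M₂))) ∘ₗ
        LinearMap.mulRight K ((1 : M₁) ⊗ₜ[K] ((↑u⁻¹ : M₁ ⊗[K] M₂))) := by
  apply TensorProduct.ext'
  intro a w
  simp [conjAut, Algebra.TensorProduct.tmul_mul_tmul, mul_assoc]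

theorem rTensor_conj (u : (M₁ ⊗[K] M₂)ˣ) :
    (conjAut K u).toLinearMap.rTensor M₂ =
      LinearMap.mulLeft K (((u : M₁ ⊗[K] M₂)) ⊗ₜ[K] (1 : M₂)) ∘ₗ
        LinearMap.mulRight K (((↑u⁻¹ : M₁ ⊗[K] M₂)) ⊗ₜ[K] (1 : M₂)) := by
  apply TensorProduct.ext'
  intro w b
  simp [conjAut, Algebra.TensorProduct.tmul_mul_tmul, mul_assoc]

theorem assocL_symm_mul (a b : M₁ ⊗[K] (M₁ ⊗[K] M₂)) :
    (TensorProduct.assoc K M₁ M₁ M₂).symm (a * b) =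
      (TensorProduct.assoc K M₁ M₁ M₂).symm a * (TensorProduct.assoc K M₁ M₁ M₂).symm b := by
  have h : ∀ x, (TensorProduct.assoc K M₁ M₁ M₂).symm x =
      (Algebra.TensorProduct.assoc K K K M₁ M₁ M₂).symm x := fun _ => rfl
  rw [h, h, h, map_mul]

theorem assocR_mul (a b : (M₁ ⊗[K] M₂) ⊗[K] M₂) :
    (TensorProduct.assoc K M₁ M₂ M₂) (a * b) =
      (TensorProduct.assoc K M₁ M₂ M₂) a * (TensorProduct.assoc K M₁ M₂ M₂) b := by
  have h : ∀ x, (TensorProduct.assoc K M₁ M₂ M₂) x =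
      (Algebra.TensorProduct.assoc K K K M₁ M₂ M₂) x := fun _ => rfl
  rw [h, h, h, map_mul]

theorem assocL_symm_one_tmul (z : M₁ ⊗[K] M₂) :
    (TensorProduct.assoc K M₁ M₁ M₂).symm ((1 : M₁) ⊗ₜ[K] z) = iota23L K M₁ M₂ z := by
  induction z using TensorProduct.induction_on with
  | zero => simp
  | tmul x y => simp [iota23L]
  | add x y hx hy => simp [tmul_add, hx, hy]

theorem assocR_tmul_one (z : M₁ ⊗[K] M₂) :
    (TensorProduct.assoc K M₁ M₂ M₂) (z ⊗ₜ[K] (1 : M₂)) = iota12R K M₁ M₂ z := by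
  induction z using TensorProduct.induction_on with
  | zero => simp
  | tmul x y => simp [iota12R]
  | add x y hx hy => simp [add_tmul, hx, hy]

theorem swapL_eq : swapL K M₁ M₂ =
    (Algebra.TensorProduct.congr (Algebra.TensorProduct.comm K M₁ M₁)
      (AlgEquiv.refl (R := K) (A₁ := M₂))).toLinearMap := by
  ext a b c
  simp [swapL]

theorem swapL_mul (a b : (M₁ ⊗[K] M₁) ⊗[K] M₂) :
    swapL K M₁ M₂ (a * b) = swapL K M₁ M₂ a * swapL K M₁ M₂ b := by
  simp only [swapL_eq, AlgEquiv.toLinearMap_apply, map_mul]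

theorem swapL_swapL (x : (M₁ ⊗[K] M₁) ⊗[K] M₂) :
    swapL K M₁ M₂ (swapL K M₁ M₂ x) = x := by
  have h : swapL K M₁ M₂ ∘ₗ swapL K M₁ M₂ = LinearMap.id := by
    ext a b c
    simp [swapL]
  simpa using LinearMap.ext_iff.mp h x

theorem swapL_iota23 (z : M₁ ⊗[K] M₂) :
    swapL K M₁ M₂ (iota23L K M₁ M₂ z) = iota13L K M₁ M₂ z := by
  induction z using TensorProduct.induction_on with
  | zero => simp
  | tmul x y => simp [swapL, iota23L, iota13L]
  | add x y hx hy => simp only [map_add, hx, hy]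

theorem swapR_eq : swapR K M₁ M₂ =
    (Algebra.TensorProduct.congr (AlgEquiv.refl (R := K) (A₁ := M₁))
      (Algebra.TensorProduct.comm K M₂ M₂)).toLinearMap := by
  ext a b c
  simp [swapR]

theorem swapR_mul (a b : M₁ ⊗[K] (M₂ ⊗[K] M₂)) :
    swapR K M₁ M₂ (a * b) = swapR K M₁ M₂ a * swapR K M₁ M₂ b := by
  simp only [swapR_eq, AlgEquiv.toLinearMap_apply, map_mul]

theorem swapR_swapR (x : M₁ ⊗[K] (M₂ ⊗[K] M₂)) :
    swapR K M₁ M₂ (swapR K M₁ M₂ x) = x := by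
  have h : swapR K M₁ M₂ ∘ₗ swapR K M₁ M₂ = LinearMap.id := by
    ext a b c
    simp [swapR]
  simpa using LinearMap.ext_iff.mp h x

theorem swapR_iota12 (z : M₁ ⊗[K] M₂) :
    swapR K M₁ M₂ (iota12R K M₁ M₂ z) = iota13R K M₁ M₂ z := by
  induction z using TensorProduct.induction_on with
  | zero => simp
  | tmul x y => simp [swapR, iota12R, iota13R]
  | add x y hx hy => simp only [map_add, hx, hy]

theorem comul_rTensor_eq :
    (comul (R := K) (A := M₁)).rTensor M₂ =
      (Algebra.TensorProduct.map (Bialgebra.comulAlgHom K M₁) (AlgHom.id K M₂)).toLinearMap := by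
  ext x y
  simp [Bialgebra.comulAlgHom_apply]

theorem comul_lTensor_eq :
    (comul (R := K) (A := M₂)).lTensor M₁ =
      (Algebra.TensorProduct.map (AlgHom.id K M₁) (Bialgebra.comulAlgHom K M₂)).toLinearMap := by
  ext x y
  simp [Bialgebra.comulAlgHom_apply]

theorem m23_conj (Z : (M₁ ⊗[K] M₂)ˣ) (w : (M₁ ⊗[K] M₁) ⊗[K] M₂) :
    m23 K M₁ M₂ (conjAut K Z).toLinearMap w =
      iota23L K M₁ M₂ ↑Z * w * iota23L K M₁ M₂ ↑(Z⁻¹) := by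
  simp only [m23, LinearMap.comp_apply, lTensor_conj, LinearEquiv.coe_coe,
    LinearMap.mulLeft_apply, LinearMap.mulRight_apply]
  rw [assocL_symm_mul, assocL_symm_mul, LinearEquiv.symm_apply_apply,
    assocL_symm_one_tmul, assocL_symm_one_tmul]
  rw [mul_assoc]

theorem m13L_conj (Z : (M₁ ⊗[K] M₂)ˣ) (w : (M₁ ⊗[K] M₁) ⊗[K] M₂) :
    m13L K M₁ M₂ (conjAut K Z).toLinearMap w =
      iota13L K M₁ M₂ ↑Z * w * iota13L K M₁ M₂ ↑(Z⁻¹) := by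
  simp only [m13L, LinearMap.comp_apply]
  rw [m23_conj, swapL_mul, swapL_mul, swapL_swapL, swapL_iota23, swapL_iota23]

theorem m12_conj (Z : (M₁ ⊗[K] M₂)ˣ) (w : M₁ ⊗[K] (M₂ ⊗[K] M₂)) :
    m12 K M₁ M₂ (conjAut K Z).toLinearMap w =
      iota12R K M₁ M₂ ↑Z * w * iota12R K M₁ M₂ ↑(Z⁻¹) := by
  simp only [m12, LinearMap.comp_apply, rTensor_conj, LinearEquiv.coe_coe,
    LinearMap.mulLeft_apply, LinearMap.mulRight_apply]
  rw [assocR_mul, assocR_mul, LinearEquiv.apply_symm_apply,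
    assocR_tmul_one, assocR_tmul_one]
  rw [mul_assoc]

theorem m13R_conj (Z : (M₁ ⊗[K] M₂)ˣ) (w : M₁ ⊗[K] (M₂ ⊗[K] M₂)) :
    m13R K M₁ M₂ (conjAut K Z).toLinearMap w =
      iota13R K M₁ M₂ ↑Z * w * iota13R K M₁ M₂ ↑(Z⁻¹) := by
  simp only [m13R, LinearMap.comp_apply]
  rw [m12_conj, swapR_mul, swapR_mul, swapR_swapR, swapR_iota12, swapR_iota12]

theorem bicharacter_gives_matching (Z : (M₁ ⊗[K] M₂)ˣ)
    (hZ₁ : (comul (R := K) (A := M₁)).rTensor M₂ (Z : M₁ ⊗[K] M₂) =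
      iota23L K M₁ M₂ (Z : M₁ ⊗[K] M₂) * iota13L K M₁ M₂ (Z : M₁ ⊗[K] M₂))
    (hZ₂ : (comul (R := K) (A := M₂)).lTensor M₁ (Z : M₁ ⊗[K] M₂) =
      iota13R K M₁ M₂ (Z : M₁ ⊗[K] M₂) * iota12R K M₁ M₂ (Z : M₁ ⊗[K] M₂)) :
    ∃ m : (M₁ ⊗[K] M₂) ≃ₐ[K] (M₁ ⊗[K] M₂),
      (∀ x : M₁ ⊗[K] M₂, m x = (Z : M₁ ⊗[K] M₂) * x * ((Z⁻¹ : (M₁ ⊗[K] M₂)ˣ) : M₁ ⊗[K] M₂)) ∧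
      MatchingLeft K M₁ M₂ m.toLinearMap ∧ MatchingRight K M₁ M₂ m.toLinearMap := by
  refine ⟨conjAut K Z, fun x => rfl, ?_, ?_⟩
  · -- MatchingLeft
    set D := Algebra.TensorProduct.map (Bialgebra.comulAlgHom K M₁) (AlgHom.id K M₂) with hDdef
    have hD := comul_rTensor_eq K M₁ M₂
    have hZ₁' : D (↑Z : M₁ ⊗[K] M₂) =
        iota23L K M₁ M₂ ↑Z * iota13L K M₁ M₂ ↑Z := by
      have := hZ₁
      rwa [hD] at this
    have hinv : D (↑(Z⁻¹) : M₁ ⊗[K] M₂) = iota13L K M₁ M₂ ↑(Z⁻¹) * iota23L K M₁ M₂ ↑(Z⁻¹) := by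
      have h3 : D (↑(Z⁻¹) : M₁ ⊗[K] M₂) * D (↑Z : M₁ ⊗[K] M₂) = 1 := by
        rw [← map_mul, Units.inv_mul, map_one]
      have h2 : (iota23L K M₁ M₂ (↑Z : M₁ ⊗[K] M₂) * iota13L K M₁ M₂ ↑Z) *
          (iota13L K M₁ M₂ (↑(Z⁻¹) : M₁ ⊗[K] M₂) * iota23L K M₁ M₂ ↑(Z⁻¹)) = 1 := by
        rw [mul_assoc, ← mul_assoc (iota13L K M₁ M₂ (↑Z : M₁ ⊗[K] M₂)), ← map_mul,
          Units.mul_inv, map_one, one_mul, ← map_mul, Units.mul_inv, map_one]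
      calc D (↑(Z⁻¹) : M₁ ⊗[K] M₂)
          = D (↑(Z⁻¹) : M₁ ⊗[K] M₂) *
            ((iota23L K M₁ M₂ (↑Z : M₁ ⊗[K] M₂) * iota13L K M₁ M₂ ↑Z) *
              (iota13L K M₁ M₂ (↑(Z⁻¹) : M₁ ⊗[K] M₂) * iota23L K M₁ M₂ ↑(Z⁻¹))) := by
            rw [h2, mul_one]
        _ = (D (↑(Z⁻¹) : M₁ ⊗[K] M₂) * D (↑Z : M₁ ⊗[K] M₂)) *
            (iota13L K M₁ M₂ (↑(Z⁻¹) : M₁ ⊗[K] M₂) * iota23L K M₁ M₂ ↑(Z⁻¹)) := by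
            rw [← hZ₁', mul_assoc]
        _ = _ := by rw [h3, one_mul]
    unfold MatchingLeft
    rw [hD]
    apply LinearMap.ext
    intro x
    simp only [LinearMap.comp_apply, AlgEquiv.toLinearMap_apply, AlgHom.toLinearMap_apply]
    rw [conjAut_apply, map_mul, map_mul, m13L_conj, m23_conj, hZ₁', hinv]
    simp only [mul_assoc]
  · -- MatchingRight
    set D := Algebra.TensorProduct.map (AlgHom.id K M₁) (Bialgebra.comulAlgHom K M₂) with hDdef
    have hD := comul_lTensor_eq K M₁ M₂
    have hZ₂' : D (↑Z : M₁ ⊗[K] M₂) =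
        iota13R K M₁ M₂ ↑Z * iota12R K M₁ M₂ ↑Z := by
      have := hZ₂
      rwa [hD] at this
    have hinv : D (↑(Z⁻¹) : M₁ ⊗[K] M₂) = iota12R K M₁ M₂ ↑(Z⁻¹) * iota13R K M₁ M₂ ↑(Z⁻¹) := by
      have h3 : D (↑(Z⁻¹) : M₁ ⊗[K] M₂) * D (↑Z : M₁ ⊗[K] M₂) = 1 := by
        rw [← map_mul, Units.inv_mul, map_one]
      have h2 : (iota13R K M₁ M₂ (↑Z : M₁ ⊗[K] M₂) * iota12R K M₁ M₂ ↑Z) *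
          (iota12R K M₁ M₂ (↑(Z⁻¹) : M₁ ⊗[K] M₂) * iota13R K M₁ M₂ ↑(Z⁻¹)) = 1 := by
        rw [mul_assoc, ← mul_assoc (iota12R K M₁ M₂ (↑Z : M₁ ⊗[K] M₂)), ← map_mul,
          Units.mul_inv, map_one, one_mul, ← map_mul, Units.mul_inv, map_one]
      calc D (↑(Z⁻¹) : M₁ ⊗[K] M₂)
          = D (↑(Z⁻¹) : M₁ ⊗[K] M₂) *
            ((iota13R K M₁ M₂ (↑Z : M₁ ⊗[K] M₂) * iota12R K M₁ M₂ ↑Z) *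
              (iota12R K M₁ M₂ (↑(Z⁻¹) : M₁ ⊗[K] M₂) * iota13R K M₁ M₂ ↑(Z⁻¹))) := by
            rw [h2, mul_one]
        _ = (D (↑(Z⁻¹) : M₁ ⊗[K] M₂) * D (↑Z : M₁ ⊗[K] M₂)) *
            (iota12R K M₁ M₂ (↑(Z⁻¹) : M₁ ⊗[K] M₂) * iota13R K M₁ M₂ ↑(Z⁻¹)) := by
            rw [← hZ₂', mul_assoc]
        _ = _ := by rw [h3, one_mul]
    unfold MatchingRight
    rw [hD]
    apply LinearMap.ext
    intro x
    simp only [LinearMap.comp_apply, AlgEquiv.toLinearMap_apply, AlgHom.toLinearMap_apply]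
    rw [conjAut_apply, map_mul, map_mul, m13R_conj, m12_conj, hZ₂', hinv]
    simp only [mul_assoc]


end
end

section
/- Every continuous 2-cocycle on ℝ with values in the circle group 𝕋 is a coboundary: if λ : ℝ × ℝ → 𝕋 is continuous and satisfies λ(t, s)·λ(t + s, r) = λ(s, r)·λ(t, s + r) for all t, s, r ∈ ℝ and λ(0, 0) = 1, then there exists a continuous function μ : ℝ → 𝕋 such that λ(t, s) = μ(t)·μ(s)·conj(μ(t + s)) for all t, s ∈ ℝ. -/
set_option maxHeartbeats 1000000

/-! STATEMENT 16: every continuous 2-cocycle `λ : ℝ × ℝ → 𝕋` with `λ(0,0) = 1` is a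
coboundary: there is a continuous `μ : ℝ → 𝕋` with `λ(t,s) = μ(t)·μ(s)·μ(t+s)⁻¹`
(conjugation in `𝕋` is inversion). -/

open Real Set Metric Finset intervalIntegral

section Auxiliary

/-- Two continuous real lifts of the same circle-valued map that agree at one point of a
preconnected set agree on the whole set. -/
lemma exp_eqOn_aux {X : Type*} [TopologicalSpace X] {s : Set X} (hs : IsPreconnected s)
    {f g : X → ℝ} (hf : ContinuousOn f s) (hg : ContinuousOn g s)
    (h : ∀ x, Circle.exp (f x) = Circle.exp (g x)) {x₀ : X} (hx₀ : x₀ ∈ s)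
    (h0 : f x₀ = g x₀) : Set.EqOn f g s := by
  haveI : DiscreteTopology ((AddSubgroup.zmultiples (2 * π) : AddSubgroup ℝ) : Set ℝ) :=
    (inferInstance : DiscreteTopology (AddSubgroup.zmultiples (2 * π)))
  intro x hx
  have key := hs.constant_of_mapsTo (f := fun y => f y - g y)
    (T := ((AddSubgroup.zmultiples (2 * π) : AddSubgroup ℝ) : Set ℝ))
    (isDiscrete_iff_discreteTopology.2 this) (hf.sub hg) ?_ hx hx₀
  · have key' : f x - g x = f x₀ - g x₀ := key; linarith [key']
  · intro y _
    obtain ⟨m, hm⟩ := Circle.exp_eq_exp.1 (h y)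
    simp only [SetLike.mem_coe]
    exact AddSubgroup.mem_zmultiples_iff.2 ⟨m, by rw [zsmul_eq_mul]; linarith⟩

lemma circle_exp_sum_aux {ι : Type*} (s : Finset ι) (f : ι → ℝ) :
    Circle.exp (∑ i ∈ s, f i) = ∏ i ∈ s, Circle.exp (f i) := by
  classical
  induction s using Finset.cons_induction with
  | empty => simp
  | cons a s ha ih => rw [Finset.sum_cons, Finset.prod_cons, Circle.exp_add, ih]

lemma continuousAt_finsum_aux {ι X : Type*} [TopologicalSpace X] (s : Finset ι) (f : ι → X → ℝ)
    {x : X} (h : ∀ i ∈ s, ContinuousAt (f i) x) :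
    ContinuousAt (fun y => ∑ i ∈ s, f i y) x := by
  classical
  induction s using Finset.cons_induction with
  | empty => simpa using continuousAt_const
  | cons a s ha ih =>
    simp only [Finset.sum_cons]
    exact (h a (Finset.mem_cons_self a s)).add
      (ih fun i hi => h i (Finset.mem_cons_of_mem hi))

lemma re_pos_of_close_aux (a b : Circle) (hd : dist a b < 1) :
    0 < ((a * b⁻¹ : Circle) : ℂ).re := by
  have ha : ‖(a : ℂ)‖ = 1 := Circle.norm_coe a
  have hb : ‖(b : ℂ)‖ = 1 := Circle.norm_coe b
  have hd' : ‖(a : ℂ) - (b : ℂ)‖ < 1 := by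
    rw [← Complex.dist_eq]; exact hd
  have hb0 : (b : ℂ) ≠ 0 := b.coe_ne_zero
  rw [Circle.coe_mul, Circle.coe_inv]
  have h1 : ‖(a : ℂ) * (b : ℂ)⁻¹ - 1‖ < 1 := by
    have e : (a : ℂ) * (b : ℂ)⁻¹ - 1 = ((a : ℂ) - b) * (b : ℂ)⁻¹ := by field_simp
    rw [e, norm_mul, norm_inv, hb]; simpa using hd'
  set z := (a : ℂ) * (b : ℂ)⁻¹ with hz
  have hz1 : ‖z‖ = 1 := by rw [hz, norm_mul, norm_inv, ha, hb]; norm_num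
  have e1 : Complex.normSq (z - 1) < 1 := by
    have := Complex.sq_norm (z - 1)
    nlinarith [norm_nonneg (z-1)]
  have e2 : Complex.normSq z = 1 := by have := Complex.sq_norm z; nlinarith
  simp only [Complex.normSq_apply, Complex.sub_re, Complex.sub_im, Complex.one_re,
    Complex.one_im] at e1 e2
  nlinarith

variable {E : Type*} [NormedAddCommGroup E] [NormedSpace ℝ E] [ProperSpace E]

lemma exists_lift_on_ball_aux (L : E → Circle) (hL : Continuous L) (R : ℝ) :
    ∃ f : E → ℝ, ContinuousOn f (ball 0 R) ∧ (∀ x, Circle.exp (f x) = L x) ∧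
      f 0 = Complex.arg ((L 0 : ℂ)) := by
  have hHc : Continuous (fun p : E × ℝ => L (p.2 • p.1)) :=
    hL.comp (continuous_snd.smul continuous_fst)
  have hK : IsCompact (closedBall (0:E) |R| ×ˢ Icc (0:ℝ) 1) :=
    (isCompact_closedBall 0 |R|).prod isCompact_Icc
  obtain ⟨δ, δpos, hδ⟩ := Metric.uniformContinuousOn_iff.1
    (hK.uniformContinuousOn_of_continuous hHc.continuousOn) 1 one_pos
  obtain ⟨n, hn⟩ := exists_nat_one_div_lt δpos
  set N : ℕ := n + 1 with hN
  have hNpos : (0:ℝ) < N := by positivity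
  -- the key closeness estimate
  have hclose : ∀ x ∈ closedBall (0:E) |R|, ∀ j ∈ Finset.range N,
      dist (L ((((j:ℝ)+1)/N) • x)) (L (((j:ℝ)/N) • x)) < 1 := by
    intro x hx j hj
    have hj' : (j:ℝ) + 1 ≤ N := by
      have := Finset.mem_range.1 hj
      exact_mod_cast Nat.succ_le_of_lt this
    have hc₁ : (((j:ℝ)+1)/N) ∈ Icc (0:ℝ) 1 :=
      ⟨by positivity, by rw [div_le_one hNpos]; exact hj'⟩
    have hc₂ : ((j:ℝ)/N) ∈ Icc (0:ℝ) 1 :=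
      ⟨by positivity, by rw [div_le_one hNpos]; linarith⟩
    have hdpq : dist ((x, (((j:ℝ)+1)/N)) : E × ℝ) ((x, ((j:ℝ)/N)) : E × ℝ) < δ := by
      rw [Prod.dist_eq]
      have h2 : dist (((j:ℝ)+1)/N) ((j:ℝ)/N) = 1 / N := by
        rw [Real.dist_eq, div_sub_div_same]
        rw [show ((j:ℝ) + 1 - j) = 1 by ring]
        rw [abs_of_pos (by positivity)]
      simp only [dist_self, h2]
      rw [max_eq_right (by positivity)]
      calc (1:ℝ)/N = 1/(n+1) := by norm_num [hN]
        _ < δ := hn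
    have h3 := hδ (x, (((j:ℝ)+1)/N)) (Set.mem_prod.2 ⟨hx, hc₁⟩)
      (x, ((j:ℝ)/N)) (Set.mem_prod.2 ⟨hx, hc₂⟩) hdpq
    exact h3
  refine ⟨fun x => Complex.arg ((L 0 : ℂ)) + ∑ j ∈ Finset.range N,
      Complex.arg ((L ((((j:ℝ)+1)/N) • x) * (L (((j:ℝ)/N) • x))⁻¹ : Circle) : ℂ), ?_, ?_, ?_⟩
  · -- continuity on the ball
    intro x hx
    apply ContinuousAt.continuousWithinAt
    apply ContinuousAt.add continuousAt_const
    apply continuousAt_finsum_aux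
    intro j hj
    have hw : Continuous (fun y : E =>
        (L ((((j:ℝ)+1)/N) • y) * (L (((j:ℝ)/N) • y))⁻¹ : Circle)) :=
      ((hL.comp (continuous_const.smul continuous_id)).mul
        (hL.comp (continuous_const.smul continuous_id)).inv)
    have hx' : x ∈ closedBall (0:E) |R| :=
      closedBall_subset_closedBall (le_abs_self R) (ball_subset_closedBall hx)
    have hre := re_pos_of_close_aux _ _ (hclose x hx' j hj)
    have harg : ContinuousAt Complex.arg
        ((L ((((j:ℝ)+1)/N) • x) * (L (((j:ℝ)/N) • x))⁻¹ : Circle) : ℂ) :=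
      Complex.continuousAt_arg (Complex.mem_slitPlane_iff.2 (Or.inl hre))
    show ContinuousAt ((Complex.arg ∘ (Subtype.val : Circle → ℂ)) ∘
      (fun y : E => L ((((j:ℝ)+1)/N) • y) * (L (((j:ℝ)/N) • y))⁻¹)) x
    exact ContinuousAt.comp (harg.comp continuous_subtype_val.continuousAt) hw.continuousAt
  · -- lifts L
    intro x
    rw [Circle.exp_add, circle_exp_sum_aux]
    have hfac : ∀ j ∈ Finset.range N,
        Circle.exp (Complex.arg ((L ((((j:ℝ)+1)/N) • x) * (L (((j:ℝ)/N) • x))⁻¹ : Circle) : ℂ))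
          = L ((((j+1 : ℕ):ℝ)/N) • x) / L ((((j:ℕ):ℝ)/N) • x) := by
      intro j hj
      rw [Circle.exp_arg, div_eq_mul_inv]
      push_cast
      rfl
    rw [Finset.prod_congr rfl hfac,
      Finset.prod_range_div (fun m : ℕ => L ((((m:ℕ):ℝ)/N) • x)) N, Circle.exp_arg]
    have h1 : ((N:ℝ)/N) = 1 := div_self (ne_of_gt hNpos)
    have h0 : ((0:ℕ):ℝ)/N = 0 := by norm_num
    rw [h1, h0, one_smul, zero_smul, mul_div_assoc', mul_div_cancel_left]
  · -- value at 0
    simp [Complex.arg_one]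

/-- Every continuous circle-valued map on a proper real normed space (in particular on `ℝ × ℝ`)
admits a global continuous logarithm. -/
lemma exists_circle_lift_aux (L : E → Circle) (hL : Continuous L) :
    ∃ f : E → ℝ, Continuous f ∧ ∀ x, Circle.exp (f x) = L x := by
  choose P hPc hPe hP0 using fun n : ℕ => exists_lift_on_ball_aux L hL (n + 1)
  have hagree : ∀ n m : ℕ, n ≤ m → Set.EqOn (P n) (P m) (ball (0:E) (n+1)) := by
    intro n m hnm
    refine exp_eqOn_aux (convex_ball (0:E) (n+1)).isPreconnected (hPc n)
      ((hPc m).mono (ball_subset_ball (by exact_mod_cast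
        (by simpa using Nat.add_le_add_right hnm 1 : (n+1:ℕ) ≤ m+1))))
      (fun x => (hPe n x).trans (hPe m x).symm)
      (mem_ball_self (by positivity)) ((hP0 n).trans (hP0 m).symm)
  refine ⟨fun x => P ⌈‖x‖⌉₊ x, ?_, fun x => hPe _ x⟩
  rw [continuous_iff_continuousAt]
  intro x₀
  set m : ℕ := ⌈‖x₀‖⌉₊ with hm
  have hx₀U : x₀ ∈ ball (0:E) (m+1) := by
    rw [mem_ball, dist_zero_right]
    calc ‖x₀‖ ≤ (m:ℝ) := Nat.le_ceil _
      _ < m + 1 := by linarith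
  have hEq : Set.EqOn (fun x => P ⌈‖x‖⌉₊ x) (P m) (ball (0:E) (m+1)) := by
    intro x hxU
    have hxn : x ∈ ball (0:E) ((⌈‖x‖⌉₊ : ℝ)+1) := by
      rw [mem_ball, dist_zero_right]
      calc ‖x‖ ≤ (⌈‖x‖⌉₊:ℝ) := Nat.le_ceil _
        _ < _ := by linarith
    rcases le_total (⌈‖x‖⌉₊ : ℕ) m with h | h
    · exact hagree _ m h hxn
    · exact (hagree m _ h hxU).symm
  have hCA : ContinuousAt (P m) x₀ := (hPc m).continuousAt (isOpen_ball.mem_nhds hx₀U)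
  exact hCA.congr ((isOpen_ball.eventually_mem hx₀U).mono (fun y hy => (hEq hy).symm))

/-- Every continuous real-valued 2-cocycle on `ℝ` is a coboundary, by an averaging argument. -/
lemma add_cocycle_coboundary_aux (f : ℝ → ℝ → ℝ)
    (hfc : Continuous fun p : ℝ × ℝ => f p.1 p.2)
    (hcoc : ∀ t s r : ℝ, f t s + f (t + s) r = f s r + f t (s + r)) :
    ∃ G : ℝ → ℝ, Continuous G ∧
      ∀ t s : ℝ, f t s = G t + G s - G (t + s) := by
  have slice : ∀ t : ℝ, Continuous (f t) := fun t =>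
    hfc.comp (continuous_const.prodMk continuous_id)
  have hc0 : ∀ t : ℝ, f t 0 = f 0 0 := by
    intro t
    have h1 := hcoc t 0 0
    simp only [add_zero, zero_add] at h1
    linarith
  have hkc : Continuous fun x : ℝ => f x 1 - f x 0 :=
    (hfc.comp (continuous_id.prodMk continuous_const)).sub
      (hfc.comp (continuous_id.prodMk continuous_const))
  have hgc : Continuous fun x : ℝ => ∫ r in (0:ℝ)..1, f x r :=
    intervalIntegral.continuous_parametric_intervalIntegral_of_continuous' hfc 0 1
  have hKc : Continuous fun x : ℝ => ∫ u in (0:ℝ)..x, (f u 1 - f u 0) :=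
    intervalIntegral.continuous_primitive (fun a b => hkc.intervalIntegrable a b) 0
  refine ⟨fun x => (∫ r in (0:ℝ)..1, f x r) - ∫ u in (0:ℝ)..x, (f u 1 - f u 0),
    hgc.sub hKc, ?_⟩
  intro t s
  have hci1 : Continuous fun r : ℝ => f t (s + r) :=
    (slice t).comp (continuous_const.add continuous_id)
  have hci2 : Continuous fun u : ℝ => f t (u + 1) :=
    (slice t).comp (continuous_id.add continuous_const)
  have hci3 : Continuous fun u : ℝ => f (t + u) 1 - f (t + u) 0 :=
    hkc.comp (continuous_const.add continuous_id)
  -- id1 : integrated cocycle identity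
  have id1 : f t s + (∫ r in (0:ℝ)..1, f (t+s) r)
      = (∫ r in (0:ℝ)..1, f s r) + ∫ u in s..(s+1), f t u := by
    have e : ∫ r in (0:ℝ)..1, (f t s + f (t+s) r) = ∫ r in (0:ℝ)..1, (f s r + f t (s+r)) :=
      intervalIntegral.integral_congr (fun r _ => hcoc t s r)
    rw [intervalIntegral.integral_add intervalIntegrable_const
          ((slice (t+s)).intervalIntegrable 0 1),
        intervalIntegral.integral_add ((slice s).intervalIntegrable 0 1)
          (hci1.intervalIntegrable 0 1),
        intervalIntegral.integral_const,
        intervalIntegral.integral_comp_add_left (f t) s] at e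
    simp only [smul_eq_mul, sub_zero, one_mul, add_zero] at e
    exact e
  have A1 : (∫ u in (0:ℝ)..s, f t u) + (∫ u in s..(s+1), f t u)
      = ∫ u in (0:ℝ)..(s+1), f t u :=
    integral_add_adjacent_intervals ((slice t).intervalIntegrable 0 s)
      ((slice t).intervalIntegrable s (s+1))
  have A2 : (∫ u in (0:ℝ)..s, f t (u+1)) = ∫ u in (1:ℝ)..(s+1), f t u := by
    have := intervalIntegral.integral_comp_add_right (a := (0:ℝ)) (b := s) (f t) 1
    rwa [zero_add] at this
  have A3 : (∫ u in (0:ℝ)..1, f t u) + (∫ u in (1:ℝ)..(s+1), f t u)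
      = ∫ u in (0:ℝ)..(s+1), f t u :=
    integral_add_adjacent_intervals ((slice t).intervalIntegrable 0 1)
      ((slice t).intervalIntegrable 1 (s+1))
  have A4 : (∫ u in (0:ℝ)..s, (f t (u+1) - f t u))
      = (∫ u in (0:ℝ)..s, f t (u+1)) - ∫ u in (0:ℝ)..s, f t u :=
    intervalIntegral.integral_sub (hci2.intervalIntegrable 0 s)
      ((slice t).intervalIntegrable 0 s)
  have A5 : (∫ u in (0:ℝ)..s, (f t (u+1) - f t u))
      = ∫ u in (0:ℝ)..s, ((f (t+u) 1 - f (t+u) 0) - (f u 1 - f u 0)) := by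
    apply intervalIntegral.integral_congr
    intro u _
    have h1 := hcoc t u 1
    have h2 := hc0 (t+u)
    have h3 := hc0 u
    dsimp only
    linarith
  have A6 : (∫ u in (0:ℝ)..s, ((f (t+u) 1 - f (t+u) 0) - (f u 1 - f u 0)))
      = (∫ u in (0:ℝ)..s, (f (t+u) 1 - f (t+u) 0)) - ∫ u in (0:ℝ)..s, (f u 1 - f u 0) :=
    intervalIntegral.integral_sub (hci3.intervalIntegrable 0 s)
      (hkc.intervalIntegrable 0 s)
  have A7 : (∫ u in (0:ℝ)..s, (f (t+u) 1 - f (t+u) 0))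
      = ∫ x in t..(t+s), (f x 1 - f x 0) := by
    have := intervalIntegral.integral_comp_add_left (a := (0:ℝ)) (b := s)
      (fun x => f x 1 - f x 0) t
    rwa [add_zero] at this
  have A8 : (∫ x in (0:ℝ)..t, (f x 1 - f x 0)) + (∫ x in t..(t+s), (f x 1 - f x 0))
      = ∫ x in (0:ℝ)..(t+s), (f x 1 - f x 0) :=
    integral_add_adjacent_intervals (hkc.intervalIntegrable 0 t)
      (hkc.intervalIntegrable t (t+s))
  dsimp only
  linarith

end Auxiliary

theorem continuous_circle_cocycle_is_coboundary (l : ℝ → ℝ → Circle)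
    (h_cont : Continuous fun p : ℝ × ℝ => l p.1 p.2)
    (h_cocycle : ∀ t s r : ℝ, l t s * l (t + s) r = l s r * l t (s + r))
    (h_norm : l 0 0 = 1) :
    ∃ μ : ℝ → Circle, Continuous μ ∧ ∀ t s : ℝ, l t s = μ t * μ s * (μ (t + s))⁻¹ := by
  obtain ⟨F, hFc, hFe⟩ := exists_circle_lift_aux (fun p : ℝ × ℝ => l p.1 p.2) h_cont
  have hfe : ∀ t s : ℝ, Circle.exp (F (t, s)) = l t s := fun t s => hFe (t, s)
  -- the lifted defect is an exact additive cocycle, by connectedness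
  have hcoc : ∀ t s r : ℝ, F (t, s) + F (t + s, r) = F (s, r) + F (t, s + r) := by
    have hdc : Continuous fun p : ℝ × ℝ × ℝ =>
        F (p.1, p.2.1) + F (p.1 + p.2.1, p.2.2)
          - (F (p.2.1, p.2.2) + F (p.1, p.2.1 + p.2.2)) := by
      have c1 : Continuous fun p : ℝ × ℝ × ℝ => F (p.1, p.2.1) :=
        hFc.comp (continuous_fst.prodMk (continuous_fst.comp continuous_snd))
      have c2 : Continuous fun p : ℝ × ℝ × ℝ => F (p.1 + p.2.1, p.2.2) :=
        hFc.comp ((continuous_fst.add (continuous_fst.comp continuous_snd)).prodMk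
          (continuous_snd.comp continuous_snd))
      have c3 : Continuous fun p : ℝ × ℝ × ℝ => F (p.2.1, p.2.2) :=
        hFc.comp ((continuous_fst.comp continuous_snd).prodMk
          (continuous_snd.comp continuous_snd))
      have c4 : Continuous fun p : ℝ × ℝ × ℝ => F (p.1, p.2.1 + p.2.2) :=
        hFc.comp (continuous_fst.prodMk ((continuous_fst.comp continuous_snd).add
          (continuous_snd.comp continuous_snd)))
      exact (c1.add c2).sub (c3.add c4)
    have hexp : ∀ p : ℝ × ℝ × ℝ,
        Circle.exp (F (p.1, p.2.1) + F (p.1 + p.2.1, p.2.2)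
          - (F (p.2.1, p.2.2) + F (p.1, p.2.1 + p.2.2)))
        = Circle.exp ((fun _ => (0:ℝ)) p) := by
      intro p
      rw [Circle.exp_zero, Circle.exp_sub, Circle.exp_add, Circle.exp_add,
        hfe, hfe, hfe, hfe, h_cocycle]
      exact div_self' _
    have hzero : Set.EqOn
        (fun p : ℝ × ℝ × ℝ => F (p.1, p.2.1) + F (p.1 + p.2.1, p.2.2)
          - (F (p.2.1, p.2.2) + F (p.1, p.2.1 + p.2.2)))
        (fun _ => (0:ℝ)) Set.univ := by
      apply exp_eqOn_aux isPreconnected_univ hdc.continuousOn continuousOn_const hexp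
        (Set.mem_univ ((0:ℝ), (0:ℝ), (0:ℝ)))
      norm_num
    intro t s r
    have := hzero (Set.mem_univ ((t, s, r) : ℝ × ℝ × ℝ))
    simp only at this
    linarith
  -- solve the additive cocycle
  have hFc2 : Continuous fun p : ℝ × ℝ => (fun t s : ℝ => F (t, s)) p.1 p.2 := by
    exact hFc
  obtain ⟨G, hGc, hGe⟩ := add_cocycle_coboundary_aux (fun t s => F (t, s)) hFc2 hcoc
  refine ⟨fun t => Circle.exp (G t), Circle.exp.continuous.comp hGc, ?_⟩
  intro t s
  have hG : F (t, s) = G t + G s - G (t + s) := hGe t s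
  rw [← hfe t s, hG, Circle.exp_sub, Circle.exp_add, div_eq_mul_inv]
end
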